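/- arXiv:2301.09845 — 2 statements merged into one kernel-verified Lean document; each statement's English description precedes it below -/
import Mathlib

section
/- For every integer m ≥ 2 and every integer n ≥ m² − m + 1, the number of partitions of n having more parts congruent to 1 modulo m than parts congruent to 0 modulo m strictly exceeds the number of partitions of n having more parts congruent to 0 modulo m than parts congruent to 1 modulo m; that is, p_{1,0,m}(n) > p_{0,1,m}(n). -/
/-- The number of partitions of `n` having more parts congruent to `j` modulo
`m` than parts congruent to `k` modulo `m`. -/
noncomputable def pmod (j k m n : ℕ) : ℕ :=
  Set.ncard {p : n.Partition |
    p.parts.countP (fun i => i % m = j % m) > p.parts.countP (fun i => i % m = k % m)}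

namespace PmodAux

/-- The involution on parts: parts `≡ 0 [MOD m]` and parts `≡ 1 [MOD m]` are swapped
by subtracting/adding `m - 1`. -/
def fm (m r : ℕ) : ℕ :=
  if r % m = 0 then r - (m - 1) else if r % m = 1 then r + (m - 1) else r

variable {m r : ℕ}

lemma le_of_mod0 (h0 : r % m = 0) (hr : r ≠ 0) : m ≤ r :=
  Nat.le_of_dvd (Nat.pos_of_ne_zero hr) (Nat.dvd_of_mod_eq_zero h0)

lemma mod_sub (hm : 2 ≤ m) (h0 : r % m = 0) (hr : r ≠ 0) : (r - (m - 1)) % m = 1 := by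
  obtain ⟨q, hq⟩ := Nat.dvd_of_mod_eq_zero h0
  have hq0 : q ≠ 0 := by rintro rfl; simp at hq; exact hr hq
  obtain ⟨q', rfl⟩ := Nat.exists_eq_succ_of_ne_zero hq0
  have hq2 : r = m * q' + m := by rw [hq, Nat.mul_succ]
  have h2 : r - (m - 1) = m * q' + 1 := by omega
  rw [h2, Nat.mul_add_mod]
  have : 1 % m = 1 := Nat.one_mod_eq_one.mpr (by omega)
  omega

lemma mod_add (hm : 2 ≤ m) (h1 : r % m = 1) : (r + (m - 1)) % m = 0 := by
  have hd := Nat.div_add_mod r m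
  rw [h1] at hd
  have h2 : r + (m - 1) = m * (r / m) + m := by omega
  rw [h2, ← Nat.mul_succ, Nat.mul_mod_right]

lemma fm_of_mod0 (h0 : r % m = 0) : fm m r = r - (m - 1) := if_pos h0

lemma fm_of_mod1 (hm : 2 ≤ m) (h1 : r % m = 1) : fm m r = r + (m - 1) := by
  unfold fm
  rw [if_neg (by omega), if_pos h1]

lemma fm_of_other (h0 : r % m ≠ 0) (h1 : r % m ≠ 1) : fm m r = r := by
  unfold fm; rw [if_neg h0, if_neg h1]

lemma fm_invol (hm : 2 ≤ m) (r : ℕ) : fm m (fm m r) = r := by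
  rcases eq_or_ne (r % m) 0 with h0 | h0
  · rcases eq_or_ne r 0 with rfl | hr
    · simp [fm]
    · have hle := le_of_mod0 h0 hr
      have h1 : (r - (m - 1)) % m = 1 := mod_sub hm h0 hr
      rw [fm_of_mod0 h0, fm_of_mod1 hm h1]
      omega
  · rcases eq_or_ne (r % m) 1 with h1 | h1
    · have h2 : (r + (m - 1)) % m = 0 := mod_add hm h1
      rw [fm_of_mod1 hm h1, fm_of_mod0 h2]
      omega
    · rw [fm_of_other h0 h1, fm_of_other h0 h1]

lemma fm_inj (hm : 2 ≤ m) : Function.Injective (fm m) :=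
  Function.LeftInverse.injective (fm_invol hm)

lemma fm_pos (hm : 2 ≤ m) (hr : r ≠ 0) : fm m r ≠ 0 := by
  rcases eq_or_ne (r % m) 0 with h0 | h0
  · have hle := le_of_mod0 h0 hr
    rw [fm_of_mod0 h0]; omega
  · rcases eq_or_ne (r % m) 1 with h1 | h1
    · rw [fm_of_mod1 hm h1]; omega
    · rw [fm_of_other h0 h1]; exact hr

lemma fm_mod0_iff (hm : 2 ≤ m) (hr : r ≠ 0) : fm m r % m = 0 ↔ r % m = 1 := by
  rcases eq_or_ne (r % m) 0 with h0 | h0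
  · rw [fm_of_mod0 h0, mod_sub hm h0 hr]; omega
  · rcases eq_or_ne (r % m) 1 with h1 | h1
    · rw [fm_of_mod1 hm h1, mod_add hm h1]; omega
    · rw [fm_of_other h0 h1]; omega

lemma fm_mod1_iff (hm : 2 ≤ m) (hr : r ≠ 0) : fm m r % m = 1 ↔ r % m = 0 := by
  rcases eq_or_ne (r % m) 0 with h0 | h0
  · rw [fm_of_mod0 h0, mod_sub hm h0 hr]; omega
  · rcases eq_or_ne (r % m) 1 with h1 | h1
    · rw [fm_of_mod1 hm h1, mod_add hm h1]; omega
    · rw [fm_of_other h0 h1]; omega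

/-- The map on multisets of parts. -/
def phi (m : ℕ) (P : Multiset ℕ) : Multiset ℕ :=
  P.map (fm m) +
    Multiset.replicate
      ((m - 1) * (P.countP (fun i => i % m = 0) - P.countP (fun i => i % m = 1))) 1

lemma countP_map' (P : Multiset ℕ) (p : ℕ → Prop) [DecidablePred p] :
    (P.map (fm m)).countP p = P.countP (fun a => p (fm m a)) := by
  rw [Multiset.countP_map, ← Multiset.countP_eq_card_filter]

lemma countP_replicate (k a : ℕ) (p : ℕ → Prop) [DecidablePred p] :
    (Multiset.replicate k a).countP p = if p a then k else 0 := by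
  induction k with
  | zero => simp
  | succ k ih =>
    rw [Multiset.replicate_succ, Multiset.countP_cons, ih]
    split_ifs <;> omega

lemma phi_count0 (hm : 2 ≤ m) (P : Multiset ℕ) (h0P : 0 ∉ P) :
    (phi m P).countP (fun i => i % m = 0) = P.countP (fun i => i % m = 1) := by
  unfold phi
  have h1m : 1 % m = 1 := Nat.one_mod_eq_one.mpr (by omega)
  rw [Multiset.countP_add, countP_map', countP_replicate]
  rw [if_neg (by omega : ¬ (1 % m = 0)), add_zero]
  exact Multiset.countP_congr rfl (fun x hx => by
    have hx0 : x ≠ 0 := fun h => h0P (h ▸ hx)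
    simp only [eq_iff_iff]
    exact fm_mod0_iff hm hx0)

lemma phi_count1 (hm : 2 ≤ m) (P : Multiset ℕ) (h0P : 0 ∉ P) :
    (phi m P).countP (fun i => i % m = 1) =
      P.countP (fun i => i % m = 0) +
        (m - 1) * (P.countP (fun i => i % m = 0) - P.countP (fun i => i % m = 1)) := by
  unfold phi
  have h1m : 1 % m = 1 := Nat.one_mod_eq_one.mpr (by omega)
  rw [Multiset.countP_add, countP_map', countP_replicate]
  rw [if_pos (by omega : 1 % m = 1)]
  congr 1
  exact Multiset.countP_congr rfl (fun x hx => by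
    have hx0 : x ≠ 0 := fun h => h0P (h ▸ hx)
    simp only [eq_iff_iff]
    exact fm_mod1_iff hm hx0)

lemma sum_map_fm (hm : 2 ≤ m) (P : Multiset ℕ) (h0P : 0 ∉ P) :
    (P.map (fm m)).sum + (m - 1) * P.countP (fun i => i % m = 0)
      = P.sum + (m - 1) * P.countP (fun i => i % m = 1) := by
  induction P using Multiset.induction_on with
  | empty => simp
  | cons a P ih =>
    have ha : a ≠ 0 := fun h => h0P (h ▸ Multiset.mem_cons_self a P)
    have hP : 0 ∉ P := fun h => h0P (Multiset.mem_cons_of_mem h)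
    have IH := ih hP
    simp only [Multiset.map_cons, Multiset.sum_cons, Multiset.countP_cons]
    rw [Nat.mul_add, Nat.mul_add]
    rcases eq_or_ne (a % m) 0 with h0 | h0
    · have hle := le_of_mod0 h0 ha
      rw [fm_of_mod0 h0, if_pos h0, if_neg (by omega : ¬ a % m = 1)]
      omega
    · rcases eq_or_ne (a % m) 1 with h1 | h1
      · rw [fm_of_mod1 hm h1, if_neg h0, if_pos h1]
        omega
      · rw [fm_of_other h0 h1, if_neg h0, if_neg h1]
        omega

lemma phi_sum (hm : 2 ≤ m) (P : Multiset ℕ) (h0P : 0 ∉ P)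
    (hst : P.countP (fun i => i % m = 1) ≤ P.countP (fun i => i % m = 0)) :
    (phi m P).sum = P.sum := by
  have h := sum_map_fm hm P h0P
  unfold phi
  rw [Multiset.sum_add, Multiset.sum_replicate, smul_eq_mul, mul_one]
  obtain ⟨d, hd⟩ := Nat.exists_eq_add_of_le hst
  rw [hd] at h ⊢
  rw [Nat.add_sub_cancel_left, Nat.mul_add] at *
  omega

lemma mul_pred (m q : ℕ) (hq : 1 ≤ q) : m * q = m * (q - 1) + m := by
  have h : q - 1 + 1 = q := by omega
  calc m * q = m * (q - 1 + 1) := by rw [h]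
  _ = m * (q - 1) + m := Nat.mul_succ _ _

lemma mod_helper (hm : 2 ≤ m) (a b q : ℕ) (h : a = m * q + b) (hb : b < m) :
    a % m = b := by
  subst h
  rw [Nat.mul_add_mod, Nat.mod_eq_of_lt hb]

/-- The injection from partitions with more parts `≡ 0` to ones with more parts `≡ 1`. -/
def F (m n : ℕ) (hm : 2 ≤ m) (p : n.Partition) : n.Partition :=
  if h : p.parts.countP (fun i => i % m = 1) ≤ p.parts.countP (fun i => i % m = 0) then
    { parts := phi m p.parts
      parts_pos := by
        intro i hi
        simp only [phi, Multiset.mem_add] at hi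
        rcases hi with hi | hi
        · obtain ⟨a, ha, rfl⟩ := Multiset.mem_map.1 hi
          have hpa := p.parts_pos ha
          exact Nat.pos_of_ne_zero (fm_pos hm (by omega))
        · rw [Multiset.eq_of_mem_replicate hi]; exact one_pos
      parts_sum := by
        have h0 : 0 ∉ p.parts := fun h0 => by simpa using p.parts_pos h0
        rw [phi_sum hm _ h0 h, p.parts_sum] }
  else p

lemma F_parts {m n : ℕ} (hm : 2 ≤ m) (p : n.Partition)
    (h : p.parts.countP (fun i => i % m = 1) ≤ p.parts.countP (fun i => i % m = 0)) :
    (F m n hm p).parts = phi m p.parts := by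
  rw [F, dif_pos h]

lemma zero_not_mem {n : ℕ} (p : n.Partition) : 0 ∉ p.parts :=
  fun h0 => by simpa using p.parts_pos h0

lemma F_count0 {m n : ℕ} (hm : 2 ≤ m) (p : n.Partition)
    (h : p.parts.countP (fun i => i % m = 1) ≤ p.parts.countP (fun i => i % m = 0)) :
    (F m n hm p).parts.countP (fun i => i % m = 0)
      = p.parts.countP (fun i => i % m = 1) := by
  rw [F_parts hm p h, phi_count0 hm _ (zero_not_mem p)]

lemma F_count1 {m n : ℕ} (hm : 2 ≤ m) (p : n.Partition)
    (h : p.parts.countP (fun i => i % m = 1) ≤ p.parts.countP (fun i => i % m = 0)) :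
    (F m n hm p).parts.countP (fun i => i % m = 1)
      = p.parts.countP (fun i => i % m = 0) +
        (m - 1) * (p.parts.countP (fun i => i % m = 0)
          - p.parts.countP (fun i => i % m = 1)) := by
  rw [F_parts hm p h, phi_count1 hm _ (zero_not_mem p)]

lemma F_one_mem {m n : ℕ} (hm : 2 ≤ m) (p : n.Partition)
    (h : p.parts.countP (fun i => i % m = 1) < p.parts.countP (fun i => i % m = 0)) :
    1 ∈ (F m n hm p).parts := by
  rw [F_parts hm p h.le]
  simp only [phi, Multiset.mem_add]
  right
  rw [Multiset.mem_replicate]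
  constructor
  · have h1 : 1 ≤ m - 1 := by omega
    have h2 : 1 ≤ p.parts.countP (fun i => i % m = 0)
        - p.parts.countP (fun i => i % m = 1) := by omega
    positivity
  · rfl

lemma x_add_mul (m x : ℕ) (hm : 2 ≤ m) : x + (m - 1) * x = m * x := by
  have h : m - 1 + 1 = m := by omega
  calc x + (m - 1) * x = (m - 1 + 1) * x := by rw [Nat.add_mul, one_mul, Nat.add_comm]
  _ = m * x := by rw [h]

lemma countP_pair (p : ℕ → Prop) [DecidablePred p] (a b : ℕ) :
    ({a, b} : Multiset ℕ).countP p = (if p a then 1 else 0) + (if p b then 1 else 0) := by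
  rw [show ({a, b} : Multiset ℕ) = a ::ₘ b ::ₘ 0 from rfl]
  rw [Multiset.countP_cons, Multiset.countP_cons, Multiset.countP_zero, zero_add]
  exact add_comm _ _

lemma countP_single (p : ℕ → Prop) [DecidablePred p] (a : ℕ) :
    ({a} : Multiset ℕ).countP p = if p a then 1 else 0 := by
  rw [show ({a} : Multiset ℕ) = a ::ₘ 0 from rfl, Multiset.countP_cons, Multiset.countP_zero,
    zero_add]

end PmodAux

open PmodAux in
theorem stmt_17 : ∀ m n : ℕ, 2 ≤ m → m ^ 2 - m + 1 ≤ n →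
    pmod 1 0 m n > pmod 0 1 m n := by
  intro m n hm hn
  have h1m : 1 % m = 1 := Nat.one_mod_eq_one.mpr (by omega)
  have hmm : 2 * m ≤ m * m := Nat.mul_le_mul_right m hm
  have hn' : m * m - m + 1 ≤ n := by rw [pow_two] at hn; exact hn
  simp only [pmod, h1m, Nat.zero_mod, gt_iff_lt]
  set A : Set n.Partition := {p | p.parts.countP (fun i => i % m = 0)
      < p.parts.countP (fun i => i % m = 1)} with hA
  set B : Set n.Partition := {p | p.parts.countP (fun i => i % m = 1)
      < p.parts.countP (fun i => i % m = 0)} with hB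
  show B.ncard < A.ncard
  -- the map sends B into A
  have hFB : ∀ p ∈ B, F m n hm p ∈ A := by
    intro p hp
    have hp' : p.parts.countP (fun i => i % m = 1)
        < p.parts.countP (fun i => i % m = 0) := hp
    have h0 := F_count0 hm p hp'.le
    have h1 := F_count1 hm p hp'.le
    show (F m n hm p).parts.countP (fun i => i % m = 0)
        < (F m n hm p).parts.countP (fun i => i % m = 1)
    omega
  -- injectivity on B
  have hFinj : Set.InjOn (F m n hm) B := by
    intro p hp q hq hpq
    have hp' : p.parts.countP (fun i => i % m = 1)
        < p.parts.countP (fun i => i % m = 0) := hp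
    have hq' : q.parts.countP (fun i => i % m = 1)
        < q.parts.countP (fun i => i % m = 0) := hq
    have e0 := F_count0 hm p hp'.le
    have e0' := F_count0 hm q hq'.le
    have e1 := F_count1 hm p hp'.le
    have e1' := F_count1 hm q hq'.le
    rw [hpq] at e0 e1
    have ht : p.parts.countP (fun i => i % m = 1)
        = q.parts.countP (fun i => i % m = 1) := by omega
    have hs : p.parts.countP (fun i => i % m = 0)
        = q.parts.countP (fun i => i % m = 0) := by
      have hxp := x_add_mul m (p.parts.countP (fun i => i % m = 0)
          - p.parts.countP (fun i => i % m = 1)) hm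
      have hxq := x_add_mul m (q.parts.countP (fun i => i % m = 0)
          - q.parts.countP (fun i => i % m = 1)) hm
      have key : m * (p.parts.countP (fun i => i % m = 0)
            - p.parts.countP (fun i => i % m = 1))
          = m * (q.parts.countP (fun i => i % m = 0)
            - q.parts.countP (fun i => i % m = 1)) := by omega
      have := Nat.eq_of_mul_eq_mul_left (by omega : 0 < m) key
      omega
    have hparts : phi m p.parts = phi m q.parts := by
      rw [← F_parts hm p hp'.le, ← F_parts hm q hq'.le, hpq]
    unfold phi at hparts
    rw [hs, ht] at hparts
    have hmap := add_right_cancel hparts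
    have := Multiset.map_injective (fm_inj hm) hmap
    exact Nat.Partition.ext this
  -- a witness in A that is not in the image
  have not_img : ∀ w : n.Partition, 1 ∉ w.parts → w ∉ (F m n hm) '' B := by
    rintro w hw ⟨p, hpB, rfl⟩
    exact hw (F_one_mem hm p hpB)
  have hmn : m ≤ n := by omega
  have hq := Nat.div_add_mod n m
  have hq1 : 1 ≤ n / m := (Nat.one_le_div_iff (by omega)).mpr hmn
  have hmul := mul_pred m (n / m) hq1
  have hmq : m ≤ m * (n / m) := Nat.le_mul_of_pos_right m (by omega)
  have hW : ∃ w ∈ A, w ∉ (F m n hm) '' B := by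
    by_cases h4 : m = 2 ∧ n = 4
    · -- special case m = 2, n = 4 : use the partition 2 + 1 + 1
      obtain ⟨rfl, rfl⟩ := h4
      refine ⟨⟨{2, 1, 1}, by intro i hi; fin_cases hi <;> omega, by simp⟩, ?_, ?_⟩
      · show Multiset.countP _ _ < Multiset.countP _ _
        decide
      · rintro ⟨p, hpB, hFp⟩
        have hp' : p.parts.countP (fun i => i % 2 = 1)
            < p.parts.countP (fun i => i % 2 = 0) := hpB
        have e0 := F_count0 hm p hp'.le
        have e1 := F_count1 hm p hp'.le
        rw [hFp] at e0 e1
        have h0 : Multiset.countP (fun i => i % 2 = 0) ({2, 1, 1} : Multiset ℕ) = 1 := by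
          decide
        have h1 : Multiset.countP (fun i => i % 2 = 1) ({2, 1, 1} : Multiset ℕ) = 1 + 1 := by
          decide
        rw [h0] at e0
        rw [h1] at e1
        omega
    · rcases Nat.lt_or_ge (n % m) 3 with hr3 | hr3
      · rcases Nat.lt_or_ge (n % m) 1 with hr0 | hr1
        · -- n % m = 0
          have hr : n % m = 0 := by omega
          rcases eq_or_ne m 2 with rfl | hm3
          · -- m = 2, n even, n ≠ 4 hence n ≥ 6 : use {n - 3, 3}
            have hn6 : 6 ≤ n := by
              rcases eq_or_ne n 4 with rfl | h
              · exact absurd ⟨rfl, rfl⟩ h4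
              · omega
            refine ⟨⟨{n - 3, 3}, by intro i hi; fin_cases hi <;> omega, by simp; omega⟩,
              ?_, not_img _ ?_⟩
            · show Multiset.countP _ _ < Multiset.countP _ _
              rw [countP_pair, countP_pair]
              split_ifs <;> omega
            · simp only [Multiset.insert_eq_cons, Multiset.mem_cons, Multiset.mem_singleton]
              push_neg
              omega
          · -- m ≥ 3 : use {n - (m - 1), m - 1}
            have hm3' : 3 ≤ m := by omega
            have ha : (n - (m - 1)) % m = 1 := mod_sub hm hr (by omega)
            have hb : (m - 1) % m = m - 1 := Nat.mod_eq_of_lt (by omega)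
            refine ⟨⟨{n - (m - 1), m - 1}, by intro i hi; fin_cases hi <;> omega,
              by simp; omega⟩, ?_, not_img _ ?_⟩
            · show Multiset.countP _ _ < Multiset.countP _ _
              rw [countP_pair, countP_pair]
              split_ifs <;> omega
            · simp only [Multiset.insert_eq_cons, Multiset.mem_cons, Multiset.mem_singleton]
              push_neg
              omega
        · rcases Nat.lt_or_ge (n % m) 2 with hr1' | hr2
          · -- n % m = 1 : use {n}
            have hr : n % m = 1 := by omega
            refine ⟨⟨{n}, by intro i hi; simp at hi; omega, by simp⟩, ?_, not_img _ ?_⟩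
            · show Multiset.countP _ _ < Multiset.countP _ _
              rw [countP_single, countP_single]
              split_ifs <;> omega
            · simp only [Multiset.mem_singleton]
              omega
          · -- n % m = 2 (so m ≥ 3) : use {n - (m + 1), m + 1}
            have hr : n % m = 2 := by omega
            have hrm : n % m < m := Nat.mod_lt _ (by omega)
            have hm3' : 3 ≤ m := by omega
            have h3m : 3 * m ≤ m * m := Nat.mul_le_mul_right m hm3'
            have ha : (n - (m + 1)) % m = 1 :=
              mod_helper hm (n - (m + 1)) 1 (n / m - 1) (by omega) (by omega)
            have hb : (m + 1) % m = 1 := mod_helper hm (m + 1) 1 1 (by omega) (by omega)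
            refine ⟨⟨{n - (m + 1), m + 1}, by intro i hi; fin_cases hi <;> omega,
              by simp; omega⟩, ?_, not_img _ ?_⟩
            · show Multiset.countP _ _ < Multiset.countP _ _
              rw [countP_pair, countP_pair]
              split_ifs <;> omega
            · simp only [Multiset.insert_eq_cons, Multiset.mem_cons, Multiset.mem_singleton]
              push_neg
              omega
      · -- n % m ≥ 3 : use {n - (n % m - 1), n % m - 1}
        have hrm : n % m < m := Nat.mod_lt _ (by omega)
        have ha : (n - (n % m - 1)) % m = 1 :=
          mod_helper hm (n - (n % m - 1)) 1 (n / m) (by omega) (by omega)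
        have hb : (n % m - 1) % m = n % m - 1 := Nat.mod_eq_of_lt (by omega)
        refine ⟨⟨{n - (n % m - 1), n % m - 1}, by intro i hi; fin_cases hi <;> omega,
          by simp; omega⟩, ?_, not_img _ ?_⟩
        · show Multiset.countP _ _ < Multiset.countP _ _
          rw [countP_pair, countP_pair]
          split_ifs <;> omega
        · simp only [Multiset.insert_eq_cons, Multiset.mem_cons, Multiset.mem_singleton]
          push_neg
          omega
  obtain ⟨w, hwA, hwB⟩ := hW
  calc B.ncard = ((F m n hm) '' B).ncard := (Set.ncard_image_of_injOn hFinj).symm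
    _ ≤ (A \ {w}).ncard := by
        apply Set.ncard_le_ncard _ ((Set.toFinite _))
        intro x hx
        obtain ⟨p, hpB, rfl⟩ := hx
        refine ⟨hFB p hpB, ?_⟩
        simp only [Set.mem_singleton_iff]
        rintro rfl
        exact hwB ⟨p, hpB, rfl⟩
    _ < A.ncard := Set.ncard_diff_singleton_lt_of_mem hwA (Set.toFinite _)
end

section
/- For every integer m ≥ 2, all integers a and b with 1 ≤ a < b ≤ m, and every positive integer n, the number of partitions of n having more parts congruent to a modulo m than parts congruent to b modulo m is at least the number of partitions of n having more parts congruent to b modulo m than parts congruent to a modulo m; that is, p_{a,b,m}(n) ≥ p_{b,a,m}(n). -/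
set_option linter.unusedSectionVars false

namespace Stmt18Aux

/-- The residue-flip map: parts `≡ a` gain `b - a`, parts `≡ b` lose `b - a`. -/
def g (m a b x : ℕ) : ℕ :=
  if x % m = a % m then x + (b - a) else if x % m = b % m then x - (b - a) else x

section

variable {m a b : ℕ} (hm : 2 ≤ m) (ha : 1 ≤ a) (hab : a < b) (hb : b ≤ m)

include ha hab hb

lemma amod : a % m = a := Nat.mod_eq_of_lt (by omega)

lemma ab_mod_ne : a % m ≠ b % m := by
  intro h
  have h2 : a ≡ b [MOD m] := h
  have h3 := (Nat.modEq_iff_dvd' (le_of_lt hab)).mp h2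
  have h4 := Nat.le_of_dvd (by omega) h3
  omega

lemma shiftA {x : ℕ} (hx : x % m = a % m) : (x + (b - a)) % m = b % m := by
  have h1 : x ≡ a [MOD m] := hx
  have h2 : x + (b - a) ≡ a + (b - a) [MOD m] := Nat.ModEq.add_right _ h1
  have h3 : a + (b - a) = b := by omega
  rwa [h3] at h2

lemma shiftB {x : ℕ} (hbx : b ≤ x) (hx : x % m = b % m) :
    (x - (b - a)) % m = a % m := by
  have h1 : (x - (b - a)) + (b - a) ≡ a + (b - a) [MOD m] := by
    have e1 : (x - (b - a)) + (b - a) = x := by omega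
    have e2 : a + (b - a) = b := by omega
    rw [e1, e2]; exact hx
  exact Nat.ModEq.add_right_cancel' _ h1

lemma b_le_of {x : ℕ} (hx0 : 0 < x) (hx : x % m = b % m) : b ≤ x := by
  rcases Nat.lt_or_ge b m with h | h
  · have h1 : b % m = b := Nat.mod_eq_of_lt h
    have h2 := Nat.mod_le x m
    omega
  · have hbm : b = m := by omega
    rw [hbm, Nat.mod_self] at hx
    have h2 : m ∣ x := Nat.dvd_of_mod_eq_zero hx
    have h3 := Nat.le_of_dvd hx0 h2
    omega

/-- Classification of values of `g`. -/
lemma g_cases (x : ℕ) :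
    (x % m = a % m ∧ g m a b x = x + (b - a)) ∨
    (x % m = b % m ∧ x = 0 ∧ g m a b x = 0) ∨
    (x % m = b % m ∧ b ≤ x ∧ g m a b x = x - (b - a)) ∨
    (¬ x % m = a % m ∧ ¬ x % m = b % m ∧ g m a b x = x) := by
  by_cases h1 : x % m = a % m
  · exact Or.inl ⟨h1, if_pos h1⟩
  · by_cases h2 : x % m = b % m
    · rcases Nat.eq_zero_or_pos x with h3 | h3
      · refine Or.inr (Or.inl ⟨h2, h3, ?_⟩)
        unfold g; rw [if_neg h1, if_pos h2]; omega
      · refine Or.inr (Or.inr (Or.inl ⟨h2, b_le_of ha hab hb h3 h2, ?_⟩))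
        unfold g; rw [if_neg h1, if_pos h2]
    · exact Or.inr (Or.inr (Or.inr ⟨h1, h2, by unfold g; rw [if_neg h1, if_neg h2]⟩))

lemma g_inj : Function.Injective (g m a b) := by
  have hne := ab_mod_ne ha hab hb
  intro x y hxy
  rcases g_cases ha hab hb x with ⟨hx1, hx2⟩ | ⟨hx1, hx0, hx2⟩ | ⟨hx1, hx0, hx2⟩ | ⟨hx1, hx1', hx2⟩ <;>
    rcases g_cases ha hab hb y with ⟨hy1, hy2⟩ | ⟨hy1, hy0, hy2⟩ | ⟨hy1, hy0, hy2⟩ | ⟨hy1, hy1', hy2⟩ <;>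
    rw [hx2, hy2] at hxy
  -- (A,A)
  · omega
  -- (A,B0)
  · omega
  -- (A,B+)
  · exfalso
    have h1 := shiftA ha hab hb hx1
    have h2 := shiftB ha hab hb hy0 hy1
    rw [hxy] at h1; rw [h1] at h2; exact hne h2.symm
  -- (A,N)
  · exfalso
    have h1 := shiftA ha hab hb hx1
    rw [hxy] at h1; exact hy1' h1
  -- (B0,A)
  · omega
  -- (B0,B0)
  · omega
  -- (B0,B+)
  · omega
  -- (B0,N)
  · exfalso
    rw [hx0, Nat.zero_mod] at hx1
    have hy0 : y = 0 := hxy.symm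
    rw [hy0, Nat.zero_mod] at hy1'
    exact hy1' hx1
  -- (B+,A)
  · exfalso
    have h1 := shiftB ha hab hb hx0 hx1
    have h2 := shiftA ha hab hb hy1
    rw [hxy] at h1; rw [h1] at h2; exact hne h2
  -- (B+,B0)
  · omega
  -- (B+,B+)
  · omega
  -- (B+,N)
  · exfalso
    have h1 := shiftB ha hab hb hx0 hx1
    rw [hxy] at h1; exact hy1 h1
  -- (N,A)
  · exfalso
    have h1 := shiftA ha hab hb hy1
    rw [← hxy] at h1; exact hx1' h1
  -- (N,B0)
  · exfalso
    rw [hy0, Nat.zero_mod] at hy1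
    have hx0 : x = 0 := hxy
    rw [hx0, Nat.zero_mod] at hx1'
    exact hx1' hy1
  -- (N,B+)
  · exfalso
    have h1 := shiftB ha hab hb hy0 hy1
    rw [← hxy] at h1; exact hx1 h1
  -- (N,N)
  · exact hxy

lemma g_pos {x : ℕ} (hx : 0 < x) : 0 < g m a b x := by
  rcases g_cases ha hab hb x with ⟨_, h⟩ | ⟨_, h0, h⟩ | ⟨_, h0, h⟩ | ⟨_, _, h⟩ <;> omega

lemma g_sum (s : Multiset ℕ) (hpos : ∀ x ∈ s, 0 < x) :
    (s.map (g m a b)).sum + (b - a) * s.countP (fun i => i % m = b % m)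
      = s.sum + (b - a) * s.countP (fun i => i % m = a % m) := by
  classical
  induction s using Multiset.induction_on with
  | empty => simp
  | cons x s ih =>
    have hx : 0 < x := hpos x (Multiset.mem_cons_self _ _)
    have hs : ∀ y ∈ s, 0 < y := fun y hy => hpos y (Multiset.mem_cons_of_mem hy)
    have IH := ih hs
    have hne := ab_mod_ne ha hab hb
    have E1 : ∀ c : ℕ, (b - a) * (c + 1) = (b - a) * c + (b - a) := by intro c; ring
    have E2 : ∀ c : ℕ, (b - a) * (c + 0) = (b - a) * c := by intro c; ring
    simp only [Multiset.map_cons, Multiset.sum_cons, Multiset.countP_cons]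
    rcases g_cases ha hab hb x with ⟨h1, h2⟩ | ⟨h1, h0, h2⟩ | ⟨h1, h0, h2⟩ | ⟨h1, h1', h2⟩
    · have h3 : ¬ x % m = b % m := by rw [h1]; exact hne
      rw [h2, if_pos h1, if_neg h3, E1, E2]
      omega
    · omega
    · have h3 : ¬ x % m = a % m := by rw [h1]; exact fun h => hne h.symm
      rw [h2, if_pos h1, if_neg h3, E1, E2]
      have hbx : b - a ≤ x := by omega
      omega
    · rw [h2, if_neg h1, if_neg h1', E2, E2]
      omega

lemma countA_map (s : Multiset ℕ) (hpos : ∀ x ∈ s, 0 < x) :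
    (s.map (g m a b)).countP (fun i => i % m = a % m)
      = s.countP (fun i => i % m = b % m) := by
  classical
  have hne := ab_mod_ne ha hab hb
  rw [Multiset.countP_map]
  rw [← Multiset.countP_eq_card_filter]
  refine Multiset.countP_congr rfl ?_
  intro x hx
  have hx0 : 0 < x := hpos x hx
  rcases g_cases ha hab hb x with ⟨h1, h2⟩ | ⟨h1, h0, h2⟩ | ⟨h1, h0, h2⟩ | ⟨h1, h1', h2⟩
  · rw [h2]
    have h3 := shiftA ha hab hb h1
    refine eq_iff_iff.2 ⟨fun h => (hne (h.symm.trans h3)).elim,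
      fun h => (hne (h1.symm.trans h)).elim⟩
  · omega
  · rw [h2]
    have h3 := shiftB ha hab hb h0 h1
    exact eq_iff_iff.2 ⟨fun _ => h1, fun _ => h3⟩
  · rw [h2]
    exact eq_iff_iff.2 ⟨fun h => absurd h h1, fun h => absurd h h1'⟩

lemma countB_map (s : Multiset ℕ) (hpos : ∀ x ∈ s, 0 < x) :
    (s.map (g m a b)).countP (fun i => i % m = b % m)
      = s.countP (fun i => i % m = a % m) := by
  classical
  have hne := ab_mod_ne ha hab hb
  rw [Multiset.countP_map]
  rw [← Multiset.countP_eq_card_filter]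
  refine Multiset.countP_congr rfl ?_
  intro x hx
  have hx0 : 0 < x := hpos x hx
  rcases g_cases ha hab hb x with ⟨h1, h2⟩ | ⟨h1, h0, h2⟩ | ⟨h1, h0, h2⟩ | ⟨h1, h1', h2⟩
  · rw [h2]
    have h3 := shiftA ha hab hb h1
    exact eq_iff_iff.2 ⟨fun _ => h1, fun _ => h3⟩
  · omega
  · rw [h2]
    have h3 := shiftB ha hab hb h0 h1
    refine eq_iff_iff.2 ⟨fun h => (hne (h3.symm.trans h)).elim,
      fun h => (hne (h.symm.trans h1)).elim⟩
  · rw [h2]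
    exact eq_iff_iff.2 ⟨fun h => absurd h h1', fun h => absurd h h1⟩

/-- The marker of weight `(b-a)*1` is not `≡ b`. -/
lemma d_mod_ne_b : ¬ ((b - a) * 1) % m = b % m := by
  intro h
  rw [Nat.mul_one] at h
  have hd : (b - a) % m = b - a := Nat.mod_eq_of_lt (by omega)
  rcases Nat.lt_or_ge b m with h2 | h2
  · rw [Nat.mod_eq_of_lt h2] at h; omega
  · have hbm : b = m := by omega
    have hb0 : b % m = 0 := by rw [hbm]; exact Nat.mod_self m
    rw [hb0] at h; omega

end

end Stmt18Aux

namespace Stmt18Aux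

section Main

variable {m a b : ℕ}

/-- The injection: flip residues and add a marker part of size `(b-a)*e`. -/
def Phi (ha : 1 ≤ a) (hab : a < b) (hb : b ≤ m) {n : ℕ} (p : n.Partition)
    (h : p.parts.countP (fun i => i % m = a % m) < p.parts.countP (fun i => i % m = b % m)) :
    n.Partition where
  parts := ((b - a) * (p.parts.countP (fun i => i % m = b % m)
      - p.parts.countP (fun i => i % m = a % m))) ::ₘ p.parts.map (g m a b)
  parts_pos := by
    intro i hi
    rcases Multiset.mem_cons.mp hi with h1 | h1
    · subst h1
      exact Nat.mul_pos (by omega) (by omega)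
    · obtain ⟨x, hx, rfl⟩ := Multiset.mem_map.mp h1
      exact g_pos ha hab hb (p.parts_pos hx)
  parts_sum := by
    rw [Multiset.sum_cons]
    have hsum := g_sum ha hab hb p.parts (fun x hx => p.parts_pos hx)
    have hps := p.parts_sum
    have h2 : (b - a) * (p.parts.countP (fun i => i % m = b % m)
          - p.parts.countP (fun i => i % m = a % m))
        + (b - a) * p.parts.countP (fun i => i % m = a % m)
        = (b - a) * p.parts.countP (fun i => i % m = b % m) := by
      rw [← Nat.mul_add]
      congr 1
      omega
    omega

lemma Phi_parts (ha : 1 ≤ a) (hab : a < b) (hb : b ≤ m) {n : ℕ} (p : n.Partition)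
    (h : p.parts.countP (fun i => i % m = a % m) < p.parts.countP (fun i => i % m = b % m)) :
    (Phi ha hab hb p h).parts = ((b - a) * (p.parts.countP (fun i => i % m = b % m)
      - p.parts.countP (fun i => i % m = a % m))) ::ₘ p.parts.map (g m a b) := rfl

lemma Phi_count_a (ha : 1 ≤ a) (hab : a < b) (hb : b ≤ m) {n : ℕ} (p : n.Partition)
    (h : p.parts.countP (fun i => i % m = a % m) < p.parts.countP (fun i => i % m = b % m)) :
    (Phi ha hab hb p h).parts.countP (fun i => i % m = a % m)
      = p.parts.countP (fun i => i % m = b % m)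
        + (if ((b - a) * (p.parts.countP (fun i => i % m = b % m)
            - p.parts.countP (fun i => i % m = a % m))) % m = a % m then 1 else 0) := by
  rw [Phi_parts, Multiset.countP_cons, countA_map ha hab hb _ (fun x hx => p.parts_pos hx)]

lemma Phi_count_b (ha : 1 ≤ a) (hab : a < b) (hb : b ≤ m) {n : ℕ} (p : n.Partition)
    (h : p.parts.countP (fun i => i % m = a % m) < p.parts.countP (fun i => i % m = b % m)) :
    (Phi ha hab hb p h).parts.countP (fun i => i % m = b % m)
      = p.parts.countP (fun i => i % m = a % m)
        + (if ((b - a) * (p.parts.countP (fun i => i % m = b % m)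
            - p.parts.countP (fun i => i % m = a % m))) % m = b % m then 1 else 0) := by
  rw [Phi_parts, Multiset.countP_cons, countB_map ha hab hb _ (fun x hx => p.parts_pos hx)]

lemma Phi_mem (ha : 1 ≤ a) (hab : a < b) (hb : b ≤ m) {n : ℕ} (p : n.Partition)
    (h : p.parts.countP (fun i => i % m = a % m) < p.parts.countP (fun i => i % m = b % m)) :
    (Phi ha hab hb p h).parts.countP (fun i => i % m = b % m)
      < (Phi ha hab hb p h).parts.countP (fun i => i % m = a % m) := by
  rw [Phi_count_a ha hab hb p h, Phi_count_b ha hab hb p h]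
  set A := p.parts.countP (fun i => i % m = a % m) with hA
  set B := p.parts.countP (fun i => i % m = b % m) with hB
  by_cases hcb : ((b - a) * (B - A)) % m = b % m
  · have he2 : B - A ≠ 1 := by
      intro h1
      rw [h1] at hcb
      exact d_mod_ne_b ha hab hb hcb
    rw [if_pos hcb]
    have : (if ((b - a) * (B - A)) % m = a % m then 1 else 0) ≤ 1 := by split <;> omega
    omega
  · rw [if_neg hcb]
    have : (if ((b - a) * (B - A)) % m = a % m then 1 else 0) ≤ 1 := by split <;> omega
    omega

/-- cancellation helper: `(x + (b-a)) % m = x % m` is impossible. -/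
lemma no_fix (hm : 2 ≤ m) (ha : 1 ≤ a) (hab : a < b) (hb : b ≤ m) {x : ℕ}
    (hx : (x + (b - a)) % m = x % m) : False := by
  have h1 : x + (b - a) ≡ x + 0 [MOD m] := by
    unfold Nat.ModEq
    rw [Nat.add_zero]
    exact hx
  have h2 : b - a ≡ 0 [MOD m] := Nat.ModEq.add_left_cancel' x h1
  have h3 : (b - a) % m = 0 % m := h2
  rw [Nat.zero_mod, Nat.mod_eq_of_lt (show b - a < m by omega)] at h3
  omega

/-- shift from class b down to class a. -/
lemma unshiftB (ha : 1 ≤ a) (hab : a < b) (hb : b ≤ m) {x : ℕ}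
    (hx : (x + (b - a)) % m = b % m) : x % m = a % m := by
  have h1 : x + (b - a) ≡ a + (b - a) [MOD m] := by
    have e2 : a + (b - a) = b := by omega
    rw [e2]
    exact hx
  exact Nat.ModEq.add_right_cancel' _ h1

lemma Phi_inj (hm : 2 ≤ m) (ha : 1 ≤ a) (hab : a < b) (hb : b ≤ m) {n : ℕ}
    (p1 p2 : n.Partition)
    (h1 : p1.parts.countP (fun i => i % m = a % m) < p1.parts.countP (fun i => i % m = b % m))
    (h2 : p2.parts.countP (fun i => i % m = a % m) < p2.parts.countP (fun i => i % m = b % m))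
    (heq : Phi ha hab hb p1 h1 = Phi ha hab hb p2 h2) : p1 = p2 := by
  have hne := ab_mod_ne (m := m) ha hab hb
  set A1 := p1.parts.countP (fun i => i % m = a % m) with hA1
  set B1 := p1.parts.countP (fun i => i % m = b % m) with hB1
  set A2 := p2.parts.countP (fun i => i % m = a % m) with hA2
  set B2 := p2.parts.countP (fun i => i % m = b % m) with hB2
  have hca := congrArg (fun q : n.Partition => q.parts.countP (fun i => i % m = a % m)) heq
  have hcb := congrArg (fun q : n.Partition => q.parts.countP (fun i => i % m = b % m)) heq
  rw [Phi_count_a ha hab hb p1 h1, Phi_count_a ha hab hb p2 h2] at hca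
  rw [Phi_count_b ha hab hb p1 h1, Phi_count_b ha hab hb p2 h2] at hcb
  rw [← hA1, ← hB1, ← hA2, ← hB2] at hca hcb
  have hmulsucc : ∀ c e : ℕ, c * (e + 1) = c * e + c := fun c e => by ring
  have hee : B1 - A1 = B2 - A2 := by
    by_cases Pa1 : ((b - a) * (B1 - A1)) % m = a % m
    · have nPb1 : ¬ ((b - a) * (B1 - A1)) % m = b % m := fun hh => hne (Pa1.symm.trans hh)
      by_cases Pa2 : ((b - a) * (B2 - A2)) % m = a % m
      · have nPb2 : ¬ ((b - a) * (B2 - A2)) % m = b % m := fun hh => hne (Pa2.symm.trans hh)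
        rw [if_pos Pa1, if_pos Pa2] at hca
        rw [if_neg nPb1, if_neg nPb2] at hcb
        omega
      · by_cases Pb2 : ((b - a) * (B2 - A2)) % m = b % m
        · -- (A, B): e2 = e1 + 2, contradiction
          exfalso
          rw [if_pos Pa1, if_neg Pa2] at hca
          rw [if_neg nPb1, if_pos Pb2] at hcb
          have he : B2 - A2 = (B1 - A1) + 1 + 1 := by omega
          have hx1 := shiftA ha hab hb Pa1
          have hexp : (b - a) * (B2 - A2) = ((b - a) * (B1 - A1) + (b - a)) + (b - a) := by
            rw [he]; ring
          rw [hexp] at Pb2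
          exact no_fix hm ha hab hb (Pb2.trans hx1.symm)
        · -- (A, N): e2 = e1 + 1, contradiction
          exfalso
          rw [if_pos Pa1, if_neg Pa2] at hca
          rw [if_neg nPb1, if_neg Pb2] at hcb
          have he : B2 - A2 = (B1 - A1) + 1 := by omega
          have hx1 := shiftA ha hab hb Pa1
          have hexp : (b - a) * (B2 - A2) = (b - a) * (B1 - A1) + (b - a) := by
            rw [he]; ring
          rw [hexp] at Pb2
          exact Pb2 hx1
    · by_cases Pb1 : ((b - a) * (B1 - A1)) % m = b % m
      · by_cases Pa2 : ((b - a) * (B2 - A2)) % m = a % m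
        · -- (B, A): e1 = e2 + 2, contradiction
          exfalso
          have nPb2 : ¬ ((b - a) * (B2 - A2)) % m = b % m := fun hh => hne (Pa2.symm.trans hh)
          rw [if_neg Pa1, if_pos Pa2] at hca
          rw [if_pos Pb1, if_neg nPb2] at hcb
          have he : B1 - A1 = (B2 - A2) + 1 + 1 := by omega
          have hx2 := shiftA ha hab hb Pa2
          have hexp : (b - a) * (B1 - A1) = ((b - a) * (B2 - A2) + (b - a)) + (b - a) := by
            rw [he]; ring
          rw [hexp] at Pb1
          exact no_fix hm ha hab hb (Pb1.trans hx2.symm)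
        · by_cases Pb2 : ((b - a) * (B2 - A2)) % m = b % m
          · rw [if_neg Pa1, if_neg Pa2] at hca
            rw [if_pos Pb1, if_pos Pb2] at hcb
            omega
          · -- (B, N): e1 = e2 + 1, contradiction
            exfalso
            rw [if_neg Pa1, if_neg Pa2] at hca
            rw [if_pos Pb1, if_neg Pb2] at hcb
            have he : B1 - A1 = (B2 - A2) + 1 := by omega
            have hexp : (b - a) * (B1 - A1) = (b - a) * (B2 - A2) + (b - a) := by
              rw [he]; ring
            rw [hexp] at Pb1
            exact Pa2 (unshiftB ha hab hb Pb1)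
      · by_cases Pa2 : ((b - a) * (B2 - A2)) % m = a % m
        · -- (N, A): e1 = e2 + 1, contradiction
          exfalso
          have nPb2 : ¬ ((b - a) * (B2 - A2)) % m = b % m := fun hh => hne (Pa2.symm.trans hh)
          rw [if_neg Pa1, if_pos Pa2] at hca
          rw [if_neg Pb1, if_neg nPb2] at hcb
          have he : B1 - A1 = (B2 - A2) + 1 := by omega
          have hx2 := shiftA ha hab hb Pa2
          have hexp : (b - a) * (B1 - A1) = (b - a) * (B2 - A2) + (b - a) := by
            rw [he]; ring
          rw [hexp] at Pb1
          exact Pb1 hx2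
        · by_cases Pb2 : ((b - a) * (B2 - A2)) % m = b % m
          · -- (N, B): e2 = e1 + 1, contradiction
            exfalso
            rw [if_neg Pa1, if_neg Pa2] at hca
            rw [if_neg Pb1, if_pos Pb2] at hcb
            have he : B2 - A2 = (B1 - A1) + 1 := by omega
            have hexp : (b - a) * (B2 - A2) = (b - a) * (B1 - A1) + (b - a) := by
              rw [he]; ring
            rw [hexp] at Pb2
            exact Pa1 (unshiftB ha hab hb Pb2)
          · rw [if_neg Pa1, if_neg Pa2] at hca
            rw [if_neg Pb1, if_neg Pb2] at hcb
            omega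
  -- now conclude equality of parts
  have hparts := congrArg Nat.Partition.parts heq
  rw [Phi_parts ha hab hb p1 h1, Phi_parts ha hab hb p2 h2] at hparts
  rw [← hA1, ← hB1, ← hA2, ← hB2, hee] at hparts
  have hmaps : p1.parts.map (g m a b) = p2.parts.map (g m a b) :=
    (Multiset.cons_inj_right _).mp hparts
  have hpp : p1.parts = p2.parts := Multiset.map_injective (g_inj ha hab hb) hmaps
  exact Nat.Partition.ext hpp

end Main

end Stmt18Aux

theorem stmt_18 : ∀ m a b n : ℕ, 2 ≤ m → 1 ≤ a → a < b → b ≤ m → 0 < n →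
    pmod a b m n ≥ pmod b a m n := by
  intro m a b n hm ha hab hb hn
  classical
  rw [ge_iff_le]
  unfold pmod
  refine Set.ncard_le_ncard_of_injOn
    (fun p => if h : p.parts.countP (fun i => i % m = a % m) <
        p.parts.countP (fun i => i % m = b % m) then Stmt18Aux.Phi ha hab hb p h else p)
    ?_ ?_ (Set.toFinite _)
  · intro p hp
    simp only [Set.mem_setOf_eq] at hp ⊢
    rw [dif_pos hp]
    exact Stmt18Aux.Phi_mem ha hab hb p hp
  · intro p1 hp1 p2 hp2 heq
    simp only [Set.mem_setOf_eq] at hp1 hp2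
    beta_reduce at heq
    rw [dif_pos hp1, dif_pos hp2] at heq
    exact Stmt18Aux.Phi_inj hm ha hab hb p1 p2 hp1 hp2 heq
end
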